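/- Let k ≥ 1 and β ≥ 2 be integers, let G be a (not necessarily bipartite) graph on vertex set V, let H be a (β,k)-HEDCS of G with hierarchical decomposition ∅ = H_0 ⊆ H_1 ⊆ … ⊆ H_k = H, and let M be a matching of G. Then there exists a partition V = L ⊔ R such that: (a) every edge of M has one endpoint in L and one endpoint in R; and (b) for every vertex v ∈ V and every i ∈ [k], |deg_{H̃_i}(v) − deg_{H_i}(v)/2| < 6·√(β·ln(kβ)) + 1, where H̃_i denotes the set of edges of H_i having one endpoint in L and one endpoint in R. -/

import Mathlib

open Finset

variable {V : Type*} [DecidableEq V]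

/-- Degree of a vertex in an edge set. -/
def deg (E : Finset (Sym2 V)) (v : V) : ℕ := (E.filter (fun e => v ∈ e)).card

/-- Edge-degree: the sum of the degrees of the two endpoints. -/
def edeg (E : Finset (Sym2 V)) (e : Sym2 V) : ℕ :=
  Sym2.lift ⟨fun u v => deg E u + deg E v, fun _ _ => add_comm _ _⟩ e

/-- Generalized `(β,β⁻,k)`-HEDCS of `G`: a hierarchical decomposition
`∅ = H_0 ⊆ H_1 ⊆ … ⊆ H_k = Hs` with edge-degrees in `H_i` of new edges at most `β`,
and every edge of `G` outside `Hs` has edge-degree at least `β⁻` in `Hs`. -/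
def IsHEDCSgen (G Hs : Finset (Sym2 V)) (β βm k : ℕ) : Prop :=
  Hs ⊆ G ∧ ∃ H : ℕ → Finset (Sym2 V),
    H 0 = ∅ ∧ H k = Hs ∧
    (∀ i < k, H i ⊆ H (i + 1)) ∧
    (∀ i, 1 ≤ i → i ≤ k → ∀ e ∈ H i \ H (i - 1), edeg (H i) e ≤ β) ∧
    (∀ e ∈ G \ Hs, βm ≤ edeg Hs e)

/-- `(β,k)`-HEDCS of `G`. -/
def IsHEDCS (G Hs : Finset (Sym2 V)) (β k : ℕ) : Prop :=
  IsHEDCSgen G Hs β (β - 1) k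

/-- Bipartite `(β,k)`-HEDCS with vertex parts `P` and `Q`
(the base graph is `Hs` itself, so the second HEDCS condition is vacuous). -/
def IsBipartiteHEDCS (P Q : Finset V) (Hs : Finset (Sym2 V)) (β k : ℕ) : Prop :=
  Disjoint P Q ∧
  (∀ e ∈ Hs, ∃ u v, e = s(u, v) ∧ u ∈ P ∧ v ∈ Q) ∧
  ∃ H : ℕ → Finset (Sym2 V),
    H 0 = ∅ ∧ H k = Hs ∧
    (∀ i < k, H i ⊆ H (i + 1)) ∧
    (∀ i, 1 ≤ i → i ≤ k → ∀ e ∈ H i \ H (i - 1), edeg (H i) e ≤ β)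

/-- A matching: a set of pairwise vertex-disjoint (non-loop) edges. -/
def IsMatching (M : Finset (Sym2 V)) : Prop :=
  (∀ e ∈ M, ¬ e.IsDiag) ∧
  ∀ e ∈ M, ∀ f ∈ M, e ≠ f → ∀ v : V, v ∈ e → v ∉ f

/-- The maximum matching size of the edge set `E`. -/
noncomputable def matchNum (E : Finset (Sym2 V)) : ℕ :=
  sSup {n : ℕ | ∃ M : Finset (Sym2 V), M ⊆ E ∧ IsMatching M ∧ M.card = n}

set_option linter.unusedSectionVars false
set_option linter.unusedVariables false


open Finset

section LLL

variable {I : Type*} [Fintype I] [DecidableEq I]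

/-- `A` is a cylinder event: determined by coordinates in `S`. -/
def IsCyl (S : Finset I) (A : Finset (I → Bool)) : Prop :=
  ∀ ω ω' : I → Bool, (∀ s ∈ S, ω s = ω' s) → ω ∈ A → ω' ∈ A

lemma IsCyl.mono {S S' : Finset I} {A : Finset (I → Bool)} (h : IsCyl S A) (hS : S ⊆ S') :
    IsCyl S' A :=
  fun ω ω' hag => h ω ω' (fun s hs => hag s (hS hs))

/-- Merge two configurations along `S`. -/
def mergeCfg (S : Finset I) (ω τ : I → Bool) : I → Bool := fun i => if i ∈ S then ω i else τ i

lemma indep_card {S T : Finset I} {A B : Finset (I → Bool)}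
    (hA : IsCyl S A) (hB : IsCyl T B) (hST : Disjoint S T) :
    ((A ∩ B).card) * 2 ^ (Fintype.card I) = A.card * B.card := by
  have key : ((A ∩ B) ×ˢ (univ : Finset (I → Bool))).card = (A ×ˢ B).card := by
    apply Finset.card_nbij' (fun p => (mergeCfg S p.1 p.2, mergeCfg S p.2 p.1))
      (fun p => (mergeCfg S p.1 p.2, mergeCfg S p.2 p.1))
    · rintro ⟨ω, τ⟩ hp
      simp only [Finset.mem_coe, Finset.mem_product, Finset.mem_inter, Finset.mem_univ, and_true] at hp
      obtain ⟨hωA, hωB⟩ := hp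
      simp only [Finset.mem_coe, Finset.mem_product]
      constructor
      · exact hA ω _ (fun s hs => by simp [mergeCfg, hs]) hωA
      · refine hB ω _ (fun s hs => ?_) hωB
        have : s ∉ S := fun h => (Finset.disjoint_left.1 hST h) hs
        simp [mergeCfg, this]
    · rintro ⟨ω, τ⟩ hp
      simp only [Finset.mem_coe, Finset.mem_product] at hp
      obtain ⟨hωA, hτB⟩ := hp
      simp only [Finset.mem_coe, Finset.mem_product, Finset.mem_inter, Finset.mem_univ, and_true]
      constructor
      · exact hA ω _ (fun s hs => by simp [mergeCfg, hs]) hωA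
      · refine hB τ _ (fun s hs => ?_) hτB
        have : s ∉ S := fun h => (Finset.disjoint_left.1 hST h) hs
        simp [mergeCfg, this]
    · rintro ⟨ω, τ⟩ _
      have h1 : mergeCfg S (mergeCfg S ω τ) (mergeCfg S τ ω) = ω := by
        funext i; by_cases h : i ∈ S <;> simp [mergeCfg, h]
      have h2 : mergeCfg S (mergeCfg S τ ω) (mergeCfg S ω τ) = τ := by
        funext i; by_cases h : i ∈ S <;> simp [mergeCfg, h]
      simp [h1, h2]
    · rintro ⟨ω, τ⟩ _
      have h1 : mergeCfg S (mergeCfg S ω τ) (mergeCfg S τ ω) = ω := by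
        funext i; by_cases h : i ∈ S <;> simp [mergeCfg, h]
      have h2 : mergeCfg S (mergeCfg S τ ω) (mergeCfg S ω τ) = τ := by
        funext i; by_cases h : i ∈ S <;> simp [mergeCfg, h]
      simp [h1, h2]
  rw [Finset.card_product, Finset.card_product, Finset.card_univ] at key
  rw [← key]
  congr 1
  simp [Fintype.card_fun]

variable {ι : Type*} [DecidableEq ι]

/-- Configurations avoiding all events indexed by `T`. -/
def GoodSet (E : ι → Finset (I → Bool)) (T : Finset ι) : Finset (I → Bool) :=
  univ.filter (fun ω => ∀ j ∈ T, ω ∉ E j)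

lemma mem_GoodSet {E : ι → Finset (I → Bool)} {T : Finset ι} {ω : I → Bool} :
    ω ∈ GoodSet E T ↔ ∀ j ∈ T, ω ∉ E j := by simp [GoodSet]

lemma GoodSet_empty (E : ι → Finset (I → Bool)) : GoodSet E ∅ = univ := by
  simp [GoodSet]

lemma GoodSet_mono {E : ι → Finset (I → Bool)} {T T' : Finset ι} (h : T ⊆ T') :
    GoodSet E T' ⊆ GoodSet E T := by
  intro ω hω
  rw [mem_GoodSet] at *
  exact fun j hj => hω j (h hj)

lemma GoodSet_insert (E : ι → Finset (I → Bool)) (a : ι) (T : Finset ι) :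
    GoodSet E (insert a T) = GoodSet E T \ E a := by
  ext ω
  simp only [mem_GoodSet, Finset.mem_sdiff, Finset.mem_insert]
  constructor
  · intro h; exact ⟨fun j hj => h j (Or.inr hj), h a (Or.inl rfl)⟩
  · rintro ⟨h1, h2⟩ j hj
    rcases hj with rfl | hj
    · exact h2
    · exact h1 j hj

lemma GoodSet_cyl {E : ι → Finset (I → Bool)} {S : ι → Finset I} {T : Finset ι}
    (h : ∀ j ∈ T, IsCyl (S j) (E j)) : IsCyl (T.biUnion S) (GoodSet E T) := by
  intro ω ω' hag hω
  rw [mem_GoodSet] at *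
  intro j hj hmem
  refine hω j hj ?_
  refine h j hj ω' ω (fun s hs => ?_) hmem
  exact (hag s (Finset.mem_biUnion.2 ⟨j, hj, hs⟩)).symm

end LLL
section LLL2

variable {I : Type*} [Fintype I] [DecidableEq I] {ι : Type*} [DecidableEq ι]

lemma lll_claim (E : ι → Finset (I → Bool)) (S : ι → Finset I) (J : Finset ι)
    (hcyl : ∀ j ∈ J, IsCyl (S j) (E j)) (x : ℝ) (hx0 : 0 ≤ x) (hx1 : x < 1) (D : ℕ)
    (hp : ∀ j ∈ J, ((E j).card : ℝ) ≤ x * (1 - x) ^ D * 2 ^ (Fintype.card I))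
    (hdep : ∀ j ∈ J, ((J.filter (fun j' => ¬ Disjoint (S j) (S j'))).card ≤ D + 1)) :
    ∀ T ⊆ J, ∀ j ∈ J, ((E j ∩ GoodSet E T).card : ℝ) ≤ x * (GoodSet E T).card := by
  have h2N : (0:ℝ) < 2 ^ (Fintype.card I) := by positivity
  have hx1' : (0:ℝ) ≤ 1 - x := by linarith
  have hpow1 : ∀ m : ℕ, (1 - x) ^ m ≤ 1 := fun m => pow_le_one₀ hx1' (by linarith)
  suffices h : ∀ n : ℕ, ∀ T ⊆ J, T.card ≤ n → ∀ j ∈ J,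
      ((E j ∩ GoodSet E T).card : ℝ) ≤ x * (GoodSet E T).card by
    intro T hT; exact h T.card T hT le_rfl
  intro n
  induction n with
  | zero =>
    intro T hTJ hTc j hj
    have hT : T = ∅ := Finset.card_eq_zero.1 (Nat.le_zero.1 hTc)
    subst hT
    rw [GoodSet_empty]
    have h1 : ((E j ∩ univ).card : ℝ) ≤ x * (1 - x) ^ D * 2 ^ (Fintype.card I) := by
      rw [Finset.inter_univ]; exact hp j hj
    have h2 : x * (1 - x) ^ D * 2 ^ (Fintype.card I) ≤ x * 2 ^ (Fintype.card I) := by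
      have h3 : (1 - x) ^ D * 2 ^ (Fintype.card I) ≤ 1 * 2 ^ (Fintype.card I) :=
        mul_le_mul_of_nonneg_right (hpow1 D) (le_of_lt h2N)
      calc x * (1 - x) ^ D * 2 ^ (Fintype.card I)
          = x * ((1 - x) ^ D * 2 ^ (Fintype.card I)) := by ring
        _ ≤ x * (1 * 2 ^ (Fintype.card I)) := mul_le_mul_of_nonneg_left (by linarith) hx0
        _ = x * 2 ^ (Fintype.card I) := by ring
    calc ((E j ∩ univ).card : ℝ) ≤ x * 2 ^ (Fintype.card I) := le_trans h1 h2
      _ = x * (univ : Finset (I → Bool)).card := by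
          rw [Finset.card_univ]; simp [Fintype.card_fun]
  | succ n ih =>
    intro T hTJ hTc j hj
    by_cases hjT : j ∈ T
    · have : E j ∩ GoodSet E T = ∅ := by
        ext ω; simp only [Finset.mem_inter, mem_GoodSet, Finset.notMem_empty, iff_false]
        rintro ⟨h1, h2⟩; exact h2 j hjT h1
      rw [this]
      simp only [Finset.card_empty, Nat.cast_zero]
      positivity
    -- j ∉ T
    set T1 := T.filter (fun t => ¬ Disjoint (S j) (S t)) with hT1def
    set T2 := T \ T1 with hT2def
    have hT1T : T1 ⊆ T := Finset.filter_subset _ _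
    have hT2T : T2 ⊆ T := Finset.sdiff_subset
    have hT12 : T2 ∪ T1 = T := Finset.sdiff_union_of_subset hT1T
    have hcards : T2.card + T1.card = T.card := Finset.card_sdiff_add_card_eq_card hT1T
    have hT1D : T1.card ≤ D := by
      by_cases hSj : Disjoint (S j) (S j)
      · have : T1 = ∅ := by
          apply Finset.filter_false_of_mem
          intro t _ hcon
          exact hcon (Finset.disjoint_left.2 (fun a ha _ => (Finset.disjoint_left.1 hSj ha) ha))
        simp [this]
      · have hins : insert j T1 ⊆ J.filter (fun j' => ¬ Disjoint (S j) (S j')) := by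
          intro a ha
          rcases Finset.mem_insert.1 ha with rfl | ha
          · exact Finset.mem_filter.2 ⟨hj, hSj⟩
          · obtain ⟨haT, hand⟩ := Finset.mem_filter.1 ha
            exact Finset.mem_filter.2 ⟨hTJ haT, hand⟩
        have := Finset.card_le_card hins
        rw [Finset.card_insert_of_notMem (fun hcon => hjT (hT1T hcon))] at this
        have := le_trans this (hdep j hj)
        omega
    -- disjointness of S j from events in T2
    have hdisj2 : ∀ t ∈ T2, Disjoint (S j) (S t) := by
      intro t ht
      obtain ⟨htT, htn⟩ := Finset.mem_sdiff.1 ht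
      by_contra hcon
      exact htn (Finset.mem_filter.2 ⟨htT, hcon⟩)
    have hindep : ((E j ∩ GoodSet E T2).card : ℝ) * 2 ^ (Fintype.card I)
        = (E j).card * (GoodSet E T2).card := by
      have := indep_card (hcyl j hj)
        (GoodSet_cyl (fun t ht => hcyl t (hTJ (hT2T ht))))
        (Finset.disjoint_biUnion_right _ _ _ |>.2 hdisj2)
      exact_mod_cast this
    -- peeling
    have hpeel : ∀ s ⊆ T1, (1 - x) ^ s.card * ((GoodSet E T2).card : ℝ)
        ≤ ((GoodSet E (T2 ∪ s)).card : ℝ) := by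
      intro s
      induction s using Finset.induction_on with
      | empty => intro _; simp
      | insert a s ha ih2 =>
        intro hsub
        have haT1 : a ∈ T1 := hsub (Finset.mem_insert_self a s)
        have hsT1 : s ⊆ T1 := fun b hb => hsub (Finset.mem_insert_of_mem hb)
        have hW : T2 ∪ insert a s = insert a (T2 ∪ s) := Finset.union_insert a T2 s
        have hWJ : T2 ∪ s ⊆ J := by
          intro b hb
          rcases Finset.mem_union.1 hb with hb | hb
          · exact hTJ (hT2T hb)
          · exact hTJ (hT1T (hsT1 hb))
        have hWcard : (T2 ∪ s).card ≤ n := by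
          have h1 : (T2 ∪ s).card ≤ T2.card + s.card := Finset.card_union_le _ _
          have h2 : s.card + 1 ≤ T1.card := by
            have := Finset.card_le_card hsub
            rw [Finset.card_insert_of_notMem ha] at this
            omega
          omega
        have hmain := ih (T2 ∪ s) hWJ hWcard a (hTJ (hT1T haT1))
        have hsplit : ((GoodSet E (T2 ∪ s)).card : ℝ)
            = ((GoodSet E (insert a (T2 ∪ s))).card : ℝ) + ((E a ∩ GoodSet E (T2 ∪ s)).card : ℝ) := by
          rw [GoodSet_insert]
          have := Finset.card_inter_add_card_sdiff (GoodSet E (T2 ∪ s)) (E a)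
          have hic : GoodSet E (T2 ∪ s) ∩ E a = E a ∩ GoodSet E (T2 ∪ s) := Finset.inter_comm _ _
          push_cast [← this, hic]
          ring
        have hstep : (1 - x) * ((GoodSet E (T2 ∪ s)).card : ℝ)
            ≤ ((GoodSet E (T2 ∪ insert a s)).card : ℝ) := by
          rw [hW]
          nlinarith [hmain, hsplit]
        calc (1 - x) ^ (insert a s).card * ((GoodSet E T2).card : ℝ)
            = (1 - x) * ((1 - x) ^ s.card * ((GoodSet E T2).card : ℝ)) := by
              rw [Finset.card_insert_of_notMem ha]; ring
          _ ≤ (1 - x) * ((GoodSet E (T2 ∪ s)).card : ℝ) := by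
              apply mul_le_mul_of_nonneg_left (ih2 hsT1) hx1'
          _ ≤ _ := hstep
    have hGT : (1 - x) ^ D * ((GoodSet E T2).card : ℝ) ≤ ((GoodSet E T).card : ℝ) := by
      have h1 := hpeel T1 (Finset.Subset.refl _)
      rw [hT12] at h1
      calc (1 - x) ^ D * ((GoodSet E T2).card : ℝ)
          ≤ (1 - x) ^ T1.card * ((GoodSet E T2).card : ℝ) := by
            apply mul_le_mul_of_nonneg_right (pow_le_pow_of_le_one hx1' (by linarith) hT1D)
            positivity
        _ ≤ _ := h1
    -- combine
    have hsub : ((E j ∩ GoodSet E T).card : ℝ) ≤ ((E j ∩ GoodSet E T2).card : ℝ) := by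
      exact_mod_cast Finset.card_le_card
        (Finset.inter_subset_inter (Finset.Subset.refl _) (GoodSet_mono hT2T))
    have hEj := hp j hj
    have hGT2nn : (0:ℝ) ≤ ((GoodSet E T2).card : ℝ) := Nat.cast_nonneg _
    have key : ((E j ∩ GoodSet E T).card : ℝ) * 2 ^ (Fintype.card I)
        ≤ x * ((GoodSet E T).card : ℝ) * 2 ^ (Fintype.card I) := by
      calc ((E j ∩ GoodSet E T).card : ℝ) * 2 ^ (Fintype.card I)
          ≤ ((E j ∩ GoodSet E T2).card : ℝ) * 2 ^ (Fintype.card I) := by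
            apply mul_le_mul_of_nonneg_right hsub (le_of_lt h2N)
        _ = (E j).card * (GoodSet E T2).card := hindep
        _ ≤ (x * (1 - x) ^ D * 2 ^ (Fintype.card I)) * (GoodSet E T2).card := by
            apply mul_le_mul_of_nonneg_right hEj hGT2nn
        _ = (x * 2 ^ (Fintype.card I)) * ((1 - x) ^ D * (GoodSet E T2).card) := by ring
        _ ≤ (x * 2 ^ (Fintype.card I)) * ((GoodSet E T).card : ℝ) := by
            apply mul_le_mul_of_nonneg_left hGT
            positivity
        _ = x * ((GoodSet E T).card : ℝ) * 2 ^ (Fintype.card I) := by ring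
    exact le_of_mul_le_mul_right key h2N

lemma lll_exists (E : ι → Finset (I → Bool)) (S : ι → Finset I) (J : Finset ι)
    (hcyl : ∀ j ∈ J, IsCyl (S j) (E j)) (x : ℝ) (hx0 : 0 ≤ x) (hx1 : x < 1) (D : ℕ)
    (hp : ∀ j ∈ J, ((E j).card : ℝ) ≤ x * (1 - x) ^ D * 2 ^ (Fintype.card I))
    (hdep : ∀ j ∈ J, ((J.filter (fun j' => ¬ Disjoint (S j) (S j'))).card ≤ D + 1)) :
    ∃ ω : I → Bool, ∀ j ∈ J, ω ∉ E j := by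
  have hx1' : (0:ℝ) < 1 - x := by linarith
  have hclaim := lll_claim E S J hcyl x hx0 hx1 D hp hdep
  have hpeel : ∀ s ⊆ J, (1 - x) ^ s.card * ((univ : Finset (I → Bool)).card : ℝ)
      ≤ ((GoodSet E s).card : ℝ) := by
    intro s
    induction s using Finset.induction_on with
    | empty => intro _; rw [GoodSet_empty]; simp
    | insert a s ha ih2 =>
      intro hsub
      have haJ : a ∈ J := hsub (Finset.mem_insert_self a s)
      have hsJ : s ⊆ J := fun b hb => hsub (Finset.mem_insert_of_mem hb)
      have hmain := hclaim s hsJ a haJ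
      have hsplit : ((GoodSet E s).card : ℝ)
          = ((GoodSet E (insert a s)).card : ℝ) + ((E a ∩ GoodSet E s).card : ℝ) := by
        rw [GoodSet_insert]
        have := Finset.card_inter_add_card_sdiff (GoodSet E s) (E a)
        have hic : GoodSet E s ∩ E a = E a ∩ GoodSet E s := Finset.inter_comm _ _
        push_cast [← this, hic]
        ring
      have hstep : (1 - x) * ((GoodSet E s).card : ℝ) ≤ ((GoodSet E (insert a s)).card : ℝ) := by
        nlinarith [hmain, hsplit]
      calc (1 - x) ^ (insert a s).card * ((univ : Finset (I → Bool)).card : ℝ)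
          = (1 - x) * ((1 - x) ^ s.card * ((univ : Finset (I → Bool)).card : ℝ)) := by
            rw [Finset.card_insert_of_notMem ha]; ring
        _ ≤ (1 - x) * ((GoodSet E s).card : ℝ) := by
            apply mul_le_mul_of_nonneg_left (ih2 hsJ) (le_of_lt hx1')
        _ ≤ _ := hstep
  have hpos : (0:ℝ) < ((GoodSet E J).card : ℝ) := by
    have h1 := hpeel J (Finset.Subset.refl _)
    have h2 : (0:ℝ) < (1 - x) ^ J.card * ((univ : Finset (I → Bool)).card : ℝ) := by
      have : (0:ℝ) < ((univ : Finset (I → Bool)).card : ℝ) := by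
        rw [Finset.card_univ]
        simp only [Fintype.card_fun, Fintype.card_bool]
        positivity
      positivity
    linarith
  have : (GoodSet E J).Nonempty := Finset.card_pos.1 (by exact_mod_cast hpos)
  obtain ⟨ω, hω⟩ := this
  exact ⟨ω, mem_GoodSet.1 hω⟩

end LLL2
section Tail

variable {I : Type*} [Fintype I] [DecidableEq I]

/-- Sum of ±1 over coordinates in `R`, comparing `ω` with targets `g`. -/
def pmSum (R : Finset I) (g : I → Bool) (ω : I → Bool) : ℝ :=
  ∑ r ∈ R, (if ω r = g r then (1:ℝ) else -1)

lemma slice_mgf (R : Finset I) (r₀ : I) (hr₀ : r₀ ∉ R) (b : Bool) (g : I → Bool) (lam : ℝ) :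
    ∑ ω : I → Bool, (if ω r₀ = b then Real.exp (lam * pmSum R g ω) else 0)
    = 2 ^ (Fintype.card I - R.card - 1) * (Real.exp lam + Real.exp (-lam)) ^ R.card := by
  classical
  set F : I → Bool → ℝ := fun i c =>
    if i = r₀ then (if c = b then 1 else 0)
    else if i ∈ R then Real.exp (lam * (if c = g i then 1 else -1)) else 1 with hF
  have hRsub : R ⊆ univ.erase r₀ := by
    intro r hr
    exact Finset.mem_erase.2 ⟨fun h => hr₀ (h ▸ hr), Finset.mem_univ r⟩
  have claim1 : ∀ ω : I → Bool,
      (if ω r₀ = b then Real.exp (lam * pmSum R g ω) else 0) = ∏ i, F i (ω i) := by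
    intro ω
    have hsplit : (∏ i, F i (ω i)) = F r₀ (ω r₀) * ∏ i ∈ univ.erase r₀, F i (ω i) :=
      (Finset.mul_prod_erase univ _ (Finset.mem_univ r₀)).symm
    by_cases hb : ω r₀ = b
    · rw [hsplit]
      have h0 : F r₀ (ω r₀) = 1 := by simp [hF, hb]
      have hrest : (∏ i ∈ univ.erase r₀, F i (ω i))
          = (∏ i ∈ (univ.erase r₀) \ R, F i (ω i)) * ∏ i ∈ R, F i (ω i) :=
        (Finset.prod_sdiff hRsub).symm
      have h1 : (∏ i ∈ (univ.erase r₀) \ R, F i (ω i)) = 1 := by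
        apply Finset.prod_eq_one
        intro i hi
        obtain ⟨hi1, hi2⟩ := Finset.mem_sdiff.1 hi
        have : i ≠ r₀ := (Finset.mem_erase.1 hi1).1
        simp [hF, this, hi2]
      have h2 : (∏ i ∈ R, F i (ω i)) = Real.exp (lam * pmSum R g ω) := by
        rw [pmSum, Finset.mul_sum, Real.exp_sum]
        apply Finset.prod_congr rfl
        intro i hi
        have : i ≠ r₀ := fun h => hr₀ (h ▸ hi)
        simp [hF, this, hi]
      rw [hrest, h1, h2, h0, one_mul, one_mul, if_pos hb]
    · rw [hsplit]
      have h0 : F r₀ (ω r₀) = 0 := by simp [hF, hb]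
      rw [h0, zero_mul, if_neg hb]
  have claim2 : (∑ ω : I → Bool, ∏ i, F i (ω i)) = ∏ i, (F i true + F i false) := by
    have := Finset.prod_univ_sum (fun _ : I => (univ : Finset Bool)) F
    rw [Fintype.piFinset_univ] at this
    rw [← this]
    apply Finset.prod_congr rfl
    intro i _
    exact Fintype.sum_bool _
  have hval : ∀ i, (F i true + F i false) =
      if i = r₀ then 1 else if i ∈ R then Real.exp lam + Real.exp (-lam) else 2 := by
    intro i
    by_cases h0 : i = r₀
    · cases b <;> simp [hF, h0]
    · by_cases h1 : i ∈ R
      · cases hg : g i <;> simp [hF, h0, h1, hg, mul_one, mul_neg] <;> ring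
      · norm_num [hF, h0, h1]
  calc ∑ ω : I → Bool, (if ω r₀ = b then Real.exp (lam * pmSum R g ω) else 0)
      = ∑ ω : I → Bool, ∏ i, F i (ω i) := Finset.sum_congr rfl (fun ω _ => claim1 ω)
    _ = ∏ i, (F i true + F i false) := claim2
    _ = 2 ^ (Fintype.card I - R.card - 1) * (Real.exp lam + Real.exp (-lam)) ^ R.card := by
        rw [Finset.prod_congr rfl (fun i _ => hval i)]
        rw [← Finset.mul_prod_erase univ _ (Finset.mem_univ r₀), if_pos rfl, one_mul]
        rw [← Finset.prod_sdiff hRsub]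
        have hA : (∏ i ∈ (univ.erase r₀) \ R,
            (if i = r₀ then (1:ℝ) else if i ∈ R then Real.exp lam + Real.exp (-lam) else 2))
            = 2 ^ (Fintype.card I - R.card - 1) := by
          rw [Finset.prod_congr rfl (fun i hi => ?_), Finset.prod_const]
          · congr 1
            rw [Finset.card_sdiff_of_subset hRsub, Finset.card_erase_of_mem (Finset.mem_univ r₀),
              Finset.card_univ]
            omega
          · obtain ⟨hi1, hi2⟩ := Finset.mem_sdiff.1 hi
            have : i ≠ r₀ := (Finset.mem_erase.1 hi1).1
            simp [this, hi2]
        have hB : (∏ i ∈ R,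
            (if i = r₀ then (1:ℝ) else if i ∈ R then Real.exp lam + Real.exp (-lam) else 2))
            = (Real.exp lam + Real.exp (-lam)) ^ R.card := by
          rw [Finset.prod_congr rfl (fun i hi => ?_), Finset.prod_const]
          have : i ≠ r₀ := fun h => hr₀ (h ▸ hi)
          simp [this, hi]
        rw [hA, hB]

lemma tail_one (R : Finset I) (hR : R.Nonempty) (r₀ : I) (hr₀ : r₀ ∉ R) (b : Bool)
    (g : I → Bool) (t : ℝ) (ht : 0 ≤ t) :
    (((univ.filter (fun ω : I → Bool => ω r₀ = b ∧ t ≤ pmSum R g ω)).card : ℝ))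
      ≤ 2 ^ (Fintype.card I) * Real.exp (-(t^2) / (2 * R.card)) / 2 := by
  classical
  have hm : (0:ℝ) < R.card := by exact_mod_cast Finset.card_pos.2 hR
  set lam : ℝ := t / R.card with hlam
  have hlam0 : 0 ≤ lam := div_nonneg ht (le_of_lt hm)
  set A := univ.filter (fun ω : I → Bool => ω r₀ = b ∧ t ≤ pmSum R g ω) with hA
  have step1 : (A.card : ℝ) * Real.exp (lam * t)
      ≤ ∑ ω : I → Bool, (if ω r₀ = b then Real.exp (lam * pmSum R g ω) else 0) := by
    have h1 : (A.card : ℝ) * Real.exp (lam * t)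
        = ∑ ω ∈ A, Real.exp (lam * t) := by rw [Finset.sum_const, nsmul_eq_mul]
    rw [h1]
    have h2 : ∀ ω ∈ A, Real.exp (lam * t)
        ≤ (if ω r₀ = b then Real.exp (lam * pmSum R g ω) else 0) := by
      intro ω hω
      obtain ⟨-, h3, h4⟩ := Finset.mem_filter.1 hω
      rw [if_pos h3]
      exact Real.exp_le_exp.2 (mul_le_mul_of_nonneg_left h4 hlam0)
    calc ∑ ω ∈ A, Real.exp (lam * t)
        ≤ ∑ ω ∈ A, (if ω r₀ = b then Real.exp (lam * pmSum R g ω) else 0) :=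
          Finset.sum_le_sum h2
      _ ≤ ∑ ω : I → Bool, (if ω r₀ = b then Real.exp (lam * pmSum R g ω) else 0) := by
          apply Finset.sum_le_sum_of_subset_of_nonneg (Finset.subset_univ A)
          intro ω _ _
          positivity
  rw [slice_mgf R r₀ hr₀ b g lam] at step1
  have hcosh : Real.exp lam + Real.exp (-lam) ≤ 2 * Real.exp (lam^2 / 2) := by
    have h := Real.cosh_le_exp_half_sq lam
    rw [Real.cosh_eq] at h
    linarith
  have hcoshpow : (Real.exp lam + Real.exp (-lam)) ^ R.card
      ≤ (2 * Real.exp (lam^2 / 2)) ^ R.card := by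
    apply pow_le_pow_left₀ (by positivity) hcosh _
  have hN1 : 1 ≤ Fintype.card I := Fintype.card_pos_iff.2 ⟨r₀⟩
  have hRN : R.card + 1 ≤ Fintype.card I := by
    have : insert r₀ R ⊆ univ := Finset.subset_univ _
    have h := Finset.card_le_card this
    rw [Finset.card_insert_of_notMem hr₀, Finset.card_univ] at h
    omega
  have pow_eq : (2:ℝ) ^ (Fintype.card I - R.card - 1) * 2 ^ R.card = 2 ^ (Fintype.card I - 1) := by
    rw [← pow_add]
    congr 1
    omega
  have key : (A.card : ℝ) * Real.exp (lam * t)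
      ≤ 2 ^ (Fintype.card I - 1) * Real.exp (R.card * (lam^2/2)) := by
    calc (A.card : ℝ) * Real.exp (lam * t)
        ≤ 2 ^ (Fintype.card I - R.card - 1) * (Real.exp lam + Real.exp (-lam)) ^ R.card := step1
      _ ≤ 2 ^ (Fintype.card I - R.card - 1) * (2 * Real.exp (lam^2 / 2)) ^ R.card := by
          apply mul_le_mul_of_nonneg_left hcoshpow (by positivity)
      _ = (2 ^ (Fintype.card I - R.card - 1) * 2 ^ R.card) * (Real.exp (lam^2/2)) ^ R.card := by
          rw [mul_pow]; ring
      _ = 2 ^ (Fintype.card I - 1) * Real.exp (R.card * (lam^2/2)) := by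
          rw [pow_eq, ← Real.exp_nat_mul]
  have hexp_eq : Real.exp (R.card * (lam^2/2)) / Real.exp (lam * t)
      = Real.exp (-(t^2) / (2 * R.card)) := by
    rw [← Real.exp_sub]
    congr 1
    rw [hlam]
    field_simp
    ring
  have hpos : (0:ℝ) < Real.exp (lam * t) := Real.exp_pos _
  have : (A.card : ℝ) ≤ 2 ^ (Fintype.card I - 1) * Real.exp (-(t^2) / (2 * R.card)) := by
    rw [← hexp_eq, ← mul_div_assoc, le_div_iff₀ hpos]
    exact key
  calc (A.card : ℝ) ≤ 2 ^ (Fintype.card I - 1) * Real.exp (-(t^2) / (2 * R.card)) := this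
    _ = 2 ^ (Fintype.card I) * Real.exp (-(t^2) / (2 * R.card)) / 2 := by
        have : (2:ℝ) ^ (Fintype.card I) = 2 ^ (Fintype.card I - 1) * 2 := by
          rw [← pow_succ]
          congr 1
          omega
        rw [this]
        ring

lemma tail_abs (R : Finset I) (hR : R.Nonempty) (r₀ : I) (hr₀ : r₀ ∉ R) (b : Bool)
    (g : I → Bool) (t : ℝ) (ht : 0 ≤ t) :
    (((univ.filter (fun ω : I → Bool => ω r₀ = b ∧ t ≤ |pmSum R g ω|)).card : ℝ))
      ≤ 2 ^ (Fintype.card I) * Real.exp (-(t^2) / (2 * R.card)) := by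
  classical
  have hneg : ∀ ω : I → Bool, pmSum R (fun i => !(g i)) ω = - pmSum R g ω := by
    intro ω
    rw [pmSum, pmSum, ← Finset.sum_neg_distrib]
    apply Finset.sum_congr rfl
    intro r _
    by_cases h : ω r = g r
    · have : ¬ (ω r = !(g r)) := by simp [h]
      simp [h, this]
    · have : ω r = !(g r) := by
        cases ho : ω r <;> cases hg : g r <;> simp_all
      simp [h, this]
  have hsub : univ.filter (fun ω : I → Bool => ω r₀ = b ∧ t ≤ |pmSum R g ω|)
      ⊆ (univ.filter (fun ω : I → Bool => ω r₀ = b ∧ t ≤ pmSum R g ω))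
        ∪ (univ.filter (fun ω : I → Bool => ω r₀ = b ∧ t ≤ pmSum R (fun i => !(g i)) ω)) := by
    intro ω hω
    obtain ⟨-, h1, h2⟩ := Finset.mem_filter.1 hω
    rcases le_abs.1 h2 with h3 | h3
    · exact Finset.mem_union_left _ (Finset.mem_filter.2 ⟨Finset.mem_univ _, h1, h3⟩)
    · refine Finset.mem_union_right _ (Finset.mem_filter.2 ⟨Finset.mem_univ _, h1, ?_⟩)
      rw [hneg ω]
      exact h3
  have h1 := tail_one R hR r₀ hr₀ b g t ht
  have h2 := tail_one R hR r₀ hr₀ b (fun i => !(g i)) t ht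
  have hcard := Finset.card_le_card hsub
  have hcard2 := Finset.card_union_le
    (univ.filter (fun ω : I → Bool => ω r₀ = b ∧ t ≤ pmSum R g ω))
    (univ.filter (fun ω : I → Bool => ω r₀ = b ∧ t ≤ pmSum R (fun i => !(g i)) ω))
  have : ((univ.filter (fun ω : I → Bool => ω r₀ = b ∧ t ≤ |pmSum R g ω|)).card : ℝ)
      ≤ ((univ.filter (fun ω : I → Bool => ω r₀ = b ∧ t ≤ pmSum R g ω)).card : ℝ)
        + ((univ.filter (fun ω : I → Bool => ω r₀ = b ∧ t ≤ pmSum R (fun i => !(g i)) ω)).card : ℝ) := by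
    exact_mod_cast le_trans hcard hcard2
  linarith

end Tail
section GraphHelpers

variable {V : Type*} [Fintype V] [DecidableEq V]

lemma sum_pm {α : Type*} (s : Finset α) (p : α → Prop) [DecidablePred p] :
    ∑ u ∈ s, (if p u then (1:ℝ) else -1)
      = 2 * ((s.filter p).card : ℝ) - (s.card : ℝ) := by
  classical
  rw [← Finset.sum_filter_add_sum_filter_not s p]
  have h1 : ∑ u ∈ s.filter p, (if p u then (1:ℝ) else -1) = ((s.filter p).card : ℝ) := by
    rw [Finset.sum_congr rfl (fun u hu => if_pos (Finset.mem_filter.1 hu).2)]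
    simp
  have h2 : ∑ u ∈ s.filter (fun u => ¬ p u), (if p u then (1:ℝ) else -1)
      = -(((s.filter (fun u => ¬ p u)).card : ℝ)) := by
    rw [Finset.sum_congr rfl (fun u hu => if_neg (Finset.mem_filter.1 hu).2)]
    simp
  rw [h1, h2]
  have h3 := Finset.card_filter_add_card_filter_not (s := s) p
  have h4 : ((s.filter p).card : ℝ) + ((s.filter (fun u => ¬ p u)).card : ℝ) = (s.card : ℝ) := by
    exact_mod_cast congrArg (Nat.cast : ℕ → ℝ) h3
  linarith

/-- Neighbours of `v` in edge set `A`. -/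
def nbrF (A : Finset (Sym2 V)) (v : V) : Finset V := univ.filter (fun u => s(v, u) ∈ A)

lemma mem_nbrF {A : Finset (Sym2 V)} {v u : V} : u ∈ nbrF A v ↔ s(v, u) ∈ A := by
  simp [nbrF]

lemma card_nbrF_filter (A : Finset (Sym2 V)) (v : V) (Q : Sym2 V → Prop) [DecidablePred Q] :
    ((nbrF A v).filter (fun u => Q s(v, u))).card = deg (A.filter Q) v := by
  classical
  apply Finset.card_nbij (fun u => s(v, u))
  · intro u hu
    obtain ⟨hu1, hu2⟩ := Finset.mem_filter.1 hu
    exact Finset.mem_filter.2 ⟨Finset.mem_filter.2 ⟨mem_nbrF.1 hu1, hu2⟩, Sym2.mem_mk_left v u⟩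
  · intro a ha b hb hab
    exact Sym2.congr_right.1 hab
  · intro e he
    obtain ⟨he1, he2⟩ := Finset.mem_filter.1 he
    obtain ⟨he3, he4⟩ := Finset.mem_filter.1 he1
    obtain ⟨u, rfl⟩ := Sym2.mem_iff_exists.1 he2
    refine ⟨u, Finset.mem_filter.2 ⟨mem_nbrF.2 he3, he4⟩, rfl⟩

lemma card_nbrF (A : Finset (Sym2 V)) (v : V) : (nbrF A v).card = deg A v := by
  classical
  have := card_nbrF_filter A v (fun _ => True)
  simpa using this

lemma nbrF_mono {A B : Finset (Sym2 V)} (h : A ⊆ B) (v : V) : nbrF A v ⊆ nbrF B v := by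
  intro u hu
  exact mem_nbrF.2 (h (mem_nbrF.1 hu))

/-- The matching partner (or `v` itself if unmatched). -/
noncomputable def mateF (M : Finset (Sym2 V)) (v : V) : V :=
  if h : ∃ u, s(v, u) ∈ M then h.choose else v

lemma mateF_mem {M : Finset (Sym2 V)} {v : V} (h : ∃ u, s(v, u) ∈ M) :
    s(v, mateF M v) ∈ M := by
  rw [mateF, dif_pos h]
  exact h.choose_spec

lemma mateF_eq_self {M : Finset (Sym2 V)} {v : V} (h : ¬ ∃ u, s(v, u) ∈ M) :
    mateF M v = v := dif_neg h

lemma mateF_ne {M : Finset (Sym2 V)} (hM : IsMatching M) {v u : V} (h : s(v, u) ∈ M) :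
    v ≠ u := by
  intro he
  exact hM.1 _ h (he ▸ Sym2.mk_isDiag_iff.2 rfl)

lemma mateF_unique {M : Finset (Sym2 V)} (hM : IsMatching M) {v u : V} (h : s(v, u) ∈ M) :
    mateF M v = u := by
  have hex : ∃ w, s(v, w) ∈ M := ⟨u, h⟩
  have h1 := mateF_mem hex
  by_contra hne
  have hedge : s(v, mateF M v) ≠ s(v, u) := by
    intro he
    rcases Sym2.eq_iff.1 he with ⟨-, h2⟩ | ⟨h2, h3⟩
    · exact hne h2
    · exact hne (h3.trans h2)
  exact hM.2 _ h1 _ h hedge v (Sym2.mem_mk_left _ _) (Sym2.mem_mk_left _ _)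

lemma mateF_invol {M : Finset (Sym2 V)} (hM : IsMatching M) (v : V) :
    mateF M (mateF M v) = v := by
  by_cases h : ∃ u, s(v, u) ∈ M
  · have h1 := mateF_mem h
    have h2 : s(mateF M v, v) ∈ M := by rwa [Sym2.eq_swap] at h1
    exact mateF_unique hM h2
  · rw [mateF_eq_self h, mateF_eq_self h]

/-- Representative of a matched pair: the endpoint with smaller key. -/
def repAux (f : V → ℕ) (m : V → V) (v : V) : V := if f v ≤ f (m v) then v else m v

lemma repAux_eq_or (f : V → ℕ) (m : V → V) (v : V) :
    repAux f m v = v ∨ repAux f m v = m v := by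
  unfold repAux; split
  · exact Or.inl rfl
  · exact Or.inr rfl

lemma repAux_mate (f : V → ℕ) (hf : Function.Injective f) (m : V → V)
    (hm : ∀ v, m (m v) = v) (v : V) : repAux f m (m v) = repAux f m v := by
  unfold repAux
  rw [hm]
  rcases lt_trichotomy (f v) (f (m v)) with h | h | h
  · rw [if_neg (not_le.2 h), if_pos (le_of_lt h)]
  · have hv : m v = v := (hf h).symm
    rw [hv]
  · rw [if_pos (le_of_lt h), if_neg (not_le.2 h)]

lemma repAux_idem (f : V → ℕ) (hf : Function.Injective f) (m : V → V)
    (hm : ∀ v, m (m v) = v) (v : V) : repAux f m (repAux f m v) = repAux f m v := by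
  rcases repAux_eq_or f m v with h | h
  · rw [h, h]
  · rw [h, repAux_mate f hf m hm, ← h]

lemma repAux_block (f : V → ℕ) (hf : Function.Injective f) (m : V → V)
    (hm : ∀ v, m (m v) = v) {a b : V} (h : repAux f m a = repAux f m b) :
    b = a ∨ b = m a := by
  have hinj : Function.Injective m := by
    intro x y hxy
    have := congrArg m hxy
    rwa [hm, hm] at this
  rcases repAux_eq_or f m a with h1 | h1 <;> rcases repAux_eq_or f m b with h2 | h2
  · left; rw [← h2, ← h, h1]
  · right; rw [h1, h2] at h
    have : m (m b) = m a := by rw [← h]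
    rw [hm] at this
    exact this
  · right; rw [h1, h2] at h; exact h.symm
  · left; rw [h1, h2] at h; exact (hinj h).symm

/-- Colour of a vertex given coin flips of representatives. -/
def chiF (rp : V → V) (ω : V → Bool) (v : V) : Bool :=
  if rp v = v then ω (rp v) else !(ω (rp v))

lemma chiF_congr (rp : V → V) {ω ω' : V → Bool} {v : V} (h : ω (rp v) = ω' (rp v)) :
    chiF rp ω v = chiF rp ω' v := by
  unfold chiF; split <;> rw [h]

lemma chiF_mate (f : V → ℕ) (hf : Function.Injective f) (m : V → V)
    (hm : ∀ v, m (m v) = v) (ω : V → Bool) {v : V} (hne : m v ≠ v) :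
    chiF (repAux f m) ω (m v) = !(chiF (repAux f m) ω v) := by
  have h1 : repAux f m (m v) = repAux f m v := repAux_mate f hf m hm v
  rcases repAux_eq_or f m v with h | h
  · have h2 : repAux f m (m v) ≠ m v := by rw [h1, h]; exact fun hc => hne hc.symm
    rw [chiF, chiF, if_neg h2, if_pos h, h1, h]
  · have h2 : repAux f m (m v) = m v := by rw [h1, h]
    have h3 : repAux f m v ≠ v := by rw [h]; exact hne
    rw [chiF, chiF, if_pos h2, if_neg h3, h1, h, Bool.not_not]

end GraphHelpers
section EventBound

variable {V : Type*} [Fintype V] [DecidableEq V]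

lemma event_bound (Hi : Finset (Sym2 V)) (hnd : ∀ e ∈ Hi, ¬ e.IsDiag)
    (f : V → ℕ) (hf : Function.Injective f)
    (m : V → V) (hminv : ∀ w, m (m w) = w)
    (v : V) (β : ℕ) (hβ0 : 0 < β) (hdegv : (nbrF Hi v).card ≤ β)
    (T : ℝ) (hT : 0 < T) :
    (((univ.filter (fun ω : V → Bool =>
        T + 1 ≤ |2 * (((nbrF Hi v).filter
            (fun u => chiF (repAux f m) ω u ≠ chiF (repAux f m) ω v)).card : ℝ)
          - ((nbrF Hi v).card : ℝ)|)).card : ℝ))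
      ≤ 2 ^ (Fintype.card V) * (2 * Real.exp (-(T^2) / (2*β))) := by
  classical
  set rp := repAux f m with hrp
  have hrep_or : ∀ w, rp w = w ∨ rp w = m w := repAux_eq_or f m
  have hblock : ∀ {a b : V}, rp a = rp b → b = a ∨ b = m a :=
    fun {a b} h => repAux_block f hf m hminv h
  set Nv := nbrF Hi v with hNv
  have hvN : v ∉ Nv := by
    intro h
    exact hnd _ (mem_nbrF.1 h) (Sym2.mk_isDiag_iff.2 rfl)
  have hmNv : ∀ u ∈ Nv, u ≠ v := fun u hu he => hvN (he ▸ hu)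
  set crs : (V → Bool) → V → Prop := fun ω u => chiF rp ω u ≠ chiF rp ω v with hcrs
  set zval : (V → Bool) → ℝ := fun ω => ∑ u ∈ Nv, (if crs ω u then (1:ℝ) else -1) with hzval
  have hZ : ∀ ω, zval ω = 2 * ((Nv.filter (crs ω)).card : ℝ) - (Nv.card : ℝ) :=
    fun ω => sum_pm Nv (crs ω)
  -- partition of the neighbours of v
  set As := Nv.filter (fun u => u = m v) with hAs
  set Ps := Nv.filter (fun u => ¬ u = m v ∧ (m u ∈ Nv ∧ m u ≠ u)) with hPs
  set Us := Nv.filter (fun u => ¬ u = m v ∧ ¬(m u ∈ Nv ∧ m u ≠ u)) with hUs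
  have hsplit : ∀ ω, zval ω = (∑ u ∈ As, (if crs ω u then (1:ℝ) else -1))
      + ((∑ u ∈ Ps, (if crs ω u then (1:ℝ) else -1))
         + (∑ u ∈ Us, (if crs ω u then (1:ℝ) else -1))) := by
    intro ω
    rw [hzval]
    simp only
    rw [← Finset.sum_filter_add_sum_filter_not Nv (fun u => u = m v)]
    congr 1
    rw [← Finset.sum_filter_add_sum_filter_not (Nv.filter (fun u => ¬ u = m v))
        (fun u => m u ∈ Nv ∧ m u ≠ u), Finset.filter_filter, Finset.filter_filter]
  have hAsub : As ⊆ {m v} := by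
    intro u hu
    rw [Finset.mem_singleton]
    exact (Finset.mem_filter.1 hu).2
  have hAbound : ∀ ω, |∑ u ∈ As, (if crs ω u then (1:ℝ) else -1)| ≤ 1 := by
    intro ω
    rcases Finset.subset_singleton_iff.1 hAsub with h | h
    · rw [h]; simp
    · rw [h, Finset.sum_singleton]
      split <;> norm_num
  have hPzero : ∀ ω, (∑ u ∈ Ps, (if crs ω u then (1:ℝ) else -1)) = 0 := by
    intro ω
    apply Finset.sum_involution (fun u _ => m u)
    · intro u hu
      obtain ⟨huN, hu1, hu2, hu3⟩ := Finset.mem_filter.1 hu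
      have hmate := chiF_mate f hf m hminv ω hu3
      rw [← hrp] at hmate
      have hcrs_m : crs ω (m u) ↔ ¬ crs ω u := by
        rw [hcrs]
        simp only
        rw [hmate]
        cases chiF rp ω u <;> cases chiF rp ω v <;> simp
      by_cases h : crs ω u
      · rw [if_pos h, if_neg (fun hc => (hcrs_m.1 hc) h)]; ring
      · rw [if_neg h, if_pos (hcrs_m.2 h)]; ring
    · intro u hu _
      exact (Finset.mem_filter.1 hu).2.2.2
    · intro u hu
      obtain ⟨huN, hu1, hu2, hu3⟩ := Finset.mem_filter.1 hu
      refine Finset.mem_filter.2 ⟨hu2, ?_, ?_, ?_⟩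
      · intro hc
        have : u = v := by
          have h5 := congrArg m hc
          rwa [hminv, hminv] at h5
        exact hmNv u huN this
      · rw [hminv]; exact huN
      · rw [hminv]; exact fun hc => hu3 hc.symm
    · intro u hu; exact hminv u
  -- properties of Us
  have hUsub : ∀ u ∈ Us, u ∈ Nv ∧ u ≠ m v ∧ (m u ∉ Nv ∨ m u = u) := by
    intro u hu
    obtain ⟨h1, h2, h3⟩ := Finset.mem_filter.1 hu
    refine ⟨h1, h2, ?_⟩
    by_cases hmm : m u ∈ Nv
    · right; by_contra hne; exact h3 ⟨hmm, hne⟩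
    · left; exact hmm
  have hrpinj : Set.InjOn rp ↑Us := by
    intro a ha b hb hab
    rcases hblock hab with h | h
    · exact h.symm
    · obtain ⟨haN, hamv, ha3⟩ := hUsub a (by exact_mod_cast ha)
      obtain ⟨hbN, -, -⟩ := hUsub b (by exact_mod_cast hb)
      rcases ha3 with h4 | h4
      · exact absurd (h ▸ hbN) h4
      · rw [h, h4]
  have hrpv : ∀ u ∈ Us, rp u ≠ rp v := by
    intro u hu hc
    rcases hblock hc with h | h
    · exact hmNv u (hUsub u hu).1 h.symm
    · have h5 : m v = u := by rw [h, hminv]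
      exact (hUsub u hu).2.1 h5.symm
  -- per-slice tail bound
  have hslice : ∀ b : Bool,
      ((univ.filter (fun ω : V → Bool => ω (rp v) = b ∧ T + 1 ≤ |zval ω|)).card : ℝ)
      ≤ 2 ^ (Fintype.card V) * Real.exp (-(T^2) / (2*β)) := by
    intro b
    set cb : Bool := if rp v = v then b else !b with hcb
    set σb : V → Bool := fun u => if rp u = u then !cb else cb with hσb
    set gb : V → Bool := fun r => if r ∈ Us then σb r else σb (m r) with hgb
    have hg : ∀ u ∈ Us, gb (rp u) = σb u := by
      intro u hu
      rcases hrep_or u with h | h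
      · rw [h, hgb]; simp only; rw [if_pos hu]
      · by_cases hmu : m u = u
        · have h2 : rp u = u := by rw [h, hmu]
          rw [h2, hgb]; simp only; rw [if_pos hu]
        · have hmuU : m u ∉ Us := by
            intro hc
            have hmN : m u ∈ Nv := (Finset.mem_filter.1 hc).1
            exact (Finset.mem_filter.1 hu).2.2 ⟨hmN, hmu⟩
          rw [h, hgb]; simp only; rw [if_neg hmuU, hminv u]
    have hchiv : ∀ ω : V → Bool, ω (rp v) = b → chiF rp ω v = cb := by
      intro ω hω
      rw [chiF, hω, hcb]
    have hcross : ∀ ω : V → Bool, ω (rp v) = b → ∀ u ∈ Us,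
        (crs ω u ↔ ω (rp u) = σb u) := by
      intro ω hω u hu
      rw [hcrs]
      simp only
      rw [hchiv ω hω, chiF, hσb]
      simp only
      by_cases h : rp u = u
      · rw [if_pos h, if_pos h]
        cases hval : ω (rp u) <;> cases hcb2 : cb <;> simp
      · rw [if_neg h, if_neg h]
        cases hval : ω (rp u) <;> cases hcb2 : cb <;> simp
    have hW : ∀ ω : V → Bool, ω (rp v) = b →
        (∑ u ∈ Us, (if crs ω u then (1:ℝ) else -1)) = pmSum (Us.image rp) gb ω := by
      intro ω hω
      rw [pmSum, Finset.sum_image (fun a ha b hb h => hrpinj (Finset.mem_coe.2 ha) (Finset.mem_coe.2 hb) h)]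
      apply Finset.sum_congr rfl
      intro u hu
      rw [hg u hu]
      by_cases h : crs ω u
      · rw [if_pos h, if_pos ((hcross ω hω u hu).1 h)]
      · rw [if_neg h, if_neg (fun hc => h ((hcross ω hω u hu).2 hc))]
    by_cases hUe : Us = ∅
    · have hempty : (univ.filter (fun ω : V → Bool => ω (rp v) = b ∧ T + 1 ≤ |zval ω|)) = ∅ := by
        apply Finset.filter_false_of_mem
        rintro ω - ⟨h1, h2⟩
        have h3 := hsplit ω
        have h4 := hAbound ω
        have h5 := hPzero ω
        have h6 : (∑ u ∈ Us, (if crs ω u then (1:ℝ) else -1)) = 0 := by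
          rw [hUe]; simp
        rw [h5, h6] at h3
        have h7 : |zval ω| ≤ 1 := by
          rw [h3]
          simpa using h4
        linarith
      rw [hempty]
      simp only [Finset.card_empty, Nat.cast_zero]
      positivity
    · have hUne : (Us.image rp).Nonempty :=
        Finset.image_nonempty.2 (Finset.nonempty_iff_ne_empty.2 hUe)
      have hr₀ : rp v ∉ Us.image rp := by
        intro hc
        obtain ⟨u, hu, he⟩ := Finset.mem_image.1 hc
        exact hrpv u hu he
      have hsub2 : univ.filter (fun ω : V → Bool => ω (rp v) = b ∧ T + 1 ≤ |zval ω|)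
          ⊆ univ.filter (fun ω : V → Bool => ω (rp v) = b ∧ T ≤ |pmSum (Us.image rp) gb ω|) := by
        intro ω hω
        obtain ⟨-, h1, h2⟩ := Finset.mem_filter.1 hω
        refine Finset.mem_filter.2 ⟨Finset.mem_univ _, h1, ?_⟩
        rw [← hW ω h1]
        have h3 := hsplit ω
        have h4 := hAbound ω
        have h5 := hPzero ω
        rw [h5] at h3
        have habs := abs_add_le (∑ u ∈ As, (if crs ω u then (1:ℝ) else -1))
          (∑ u ∈ Us, (if crs ω u then (1:ℝ) else -1))
        have h8 : |zval ω| ≤ 1 + |∑ u ∈ Us, (if crs ω u then (1:ℝ) else -1)| := by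
          rw [h3]
          calc |(∑ u ∈ As, (if crs ω u then (1:ℝ) else -1))
              + (0 + ∑ u ∈ Us, (if crs ω u then (1:ℝ) else -1))| = _ := by rw [zero_add]
            _ ≤ _ := habs
            _ ≤ 1 + |∑ u ∈ Us, (if crs ω u then (1:ℝ) else -1)| := by linarith
        linarith
      have htail := tail_abs (Us.image rp) hUne (rp v) hr₀ b gb T (le_of_lt hT)
      have hcard : ((univ.filter (fun ω : V → Bool =>
            ω (rp v) = b ∧ T + 1 ≤ |zval ω|)).card : ℝ)
          ≤ 2 ^ (Fintype.card V) * Real.exp (-(T^2) / (2 * (Us.image rp).card)) := by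
        refine le_trans ?_ htail
        exact_mod_cast Finset.card_le_card hsub2
      have himg : ((Us.image rp).card : ℝ) ≤ (β : ℝ) := by
        have h1 : (Us.image rp).card ≤ Us.card := Finset.card_image_le
        have h2 : Us.card ≤ Nv.card := Finset.card_le_card (Finset.filter_subset _ _)
        exact_mod_cast le_trans h1 (le_trans h2 hdegv)
      have himg0 : (0:ℝ) < ((Us.image rp).card : ℝ) := by
        exact_mod_cast Finset.card_pos.2 hUne
      have hmono : Real.exp (-(T^2) / (2 * ((Us.image rp).card : ℝ)))
          ≤ Real.exp (-(T^2) / (2 * (β:ℝ))) := by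
        apply Real.exp_le_exp.2
        rw [neg_div, neg_div, neg_le_neg_iff]
        apply div_le_div_of_nonneg_left (by positivity) (by linarith) (by linarith)
      calc ((univ.filter (fun ω : V → Bool => ω (rp v) = b ∧ T + 1 ≤ |zval ω|)).card : ℝ)
          ≤ 2 ^ (Fintype.card V) * Real.exp (-(T^2) / (2 * (Us.image rp).card)) := hcard
        _ ≤ 2 ^ (Fintype.card V) * Real.exp (-(T^2) / (2*β)) := by
            apply mul_le_mul_of_nonneg_left hmono (by positivity)
  -- combine the two slices
  have hEq : (univ.filter (fun ω : V → Bool =>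
      T + 1 ≤ |2 * ((Nv.filter (fun u => chiF rp ω u ≠ chiF rp ω v)).card : ℝ) - (Nv.card : ℝ)|))
      = univ.filter (fun ω : V → Bool => T + 1 ≤ |zval ω|) := by
    apply Finset.filter_congr
    intro ω _
    rw [hZ ω]
  have hcover : univ.filter (fun ω : V → Bool => T + 1 ≤ |zval ω|)
      ⊆ (univ.filter (fun ω : V → Bool => ω (rp v) = true ∧ T + 1 ≤ |zval ω|))
        ∪ (univ.filter (fun ω : V → Bool => ω (rp v) = false ∧ T + 1 ≤ |zval ω|)) := by
    intro ω hω
    obtain ⟨-, h1⟩ := Finset.mem_filter.1 hω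
    cases hvb : ω (rp v)
    · exact Finset.mem_union_right _ (Finset.mem_filter.2 ⟨Finset.mem_univ _, hvb, h1⟩)
    · exact Finset.mem_union_left _ (Finset.mem_filter.2 ⟨Finset.mem_univ _, hvb, h1⟩)
  have h1 := hslice true
  have h2 := hslice false
  have h3 : ((univ.filter (fun ω : V → Bool => T + 1 ≤ |zval ω|)).card : ℝ)
      ≤ ((univ.filter (fun ω : V → Bool => ω (rp v) = true ∧ T + 1 ≤ |zval ω|)).card : ℝ)
        + ((univ.filter (fun ω : V → Bool => ω (rp v) = false ∧ T + 1 ≤ |zval ω|)).card : ℝ) := by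
    have := le_trans (Finset.card_le_card hcover) (Finset.card_union_le _ _)
    exact_mod_cast this
  rw [hEq]
  linarith

end EventBound

set_option maxHeartbeats 1000000 in
/-- For a `(β,k)`-HEDCS `H` of `G` with hierarchical decomposition
`∅ = H_0 ⊆ … ⊆ H_k = H` and a matching `M` of `G`, there is a partition `V = L ⊔ R`
(with `R = Lᶜ`) such that every edge of `M` crosses the partition, and for every vertex
`v` and every `i ∈ [k]`, `|deg_{H̃_i}(v) − deg_{H_i}(v)/2| < 6·√(β·ln(kβ)) + 1`, where
`H̃_i` is the set of edges of `H_i` crossing the partition. -/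
theorem hedcs_balanced_bipartition {V : Type*} [Fintype V] [DecidableEq V]
    (β k : ℕ) (hβ : 2 ≤ β) (hk : 1 ≤ k)
    (G : Finset (Sym2 V)) (hG : ∀ e ∈ G, ¬ e.IsDiag)
    (H : ℕ → Finset (Sym2 V))
    (hH0 : H 0 = ∅) (hchain : ∀ i < k, H i ⊆ H (i + 1)) (hHk : H k ⊆ G)
    (hprop1 : ∀ i, 1 ≤ i → i ≤ k → ∀ e ∈ H i \ H (i - 1), edeg (H i) e ≤ β)
    (hprop2 : ∀ e ∈ G \ H k, β - 1 ≤ edeg (H k) e)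
    (M : Finset (Sym2 V)) (hMG : M ⊆ G) (hM : IsMatching M) :
    ∃ L : Finset V,
      (∀ e ∈ M, ∃ u v, e = s(u, v) ∧ u ∈ L ∧ v ∉ L) ∧
      ∀ v : V, ∀ i, 1 ≤ i → i ≤ k →
        |((deg ((H i).filter (fun e => ∃ u w, e = s(u, w) ∧ u ∈ L ∧ w ∉ L)) v : ℝ))
            - (deg (H i) v : ℝ) / 2|
          < 6 * Real.sqrt ((β : ℝ) * Real.log ((k : ℝ) * β)) + 1 := by
  classical
  -- numeric setup
  set c : ℝ := (k : ℝ) * (β : ℝ) with hc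
  have hc2 : (2:ℝ) ≤ c := by
    have h1 : (1:ℝ) ≤ (k:ℝ) := by exact_mod_cast hk
    have h2 : (2:ℝ) ≤ (β:ℝ) := by exact_mod_cast hβ
    nlinarith
  have hc0 : (0:ℝ) < c := by linarith
  have hlogc : (0:ℝ) < Real.log c := Real.log_pos (by linarith)
  have hβ0R : (0:ℝ) < (β:ℝ) := by exact_mod_cast (by omega : 0 < β)
  have hz : (0:ℝ) ≤ (β:ℝ) * Real.log c := by positivity
  set B : ℝ := 6 * Real.sqrt ((β : ℝ) * Real.log c) with hB
  have hB0 : 0 ≤ B := by positivity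
  have hBsq : B ^ 2 = 36 * ((β:ℝ) * Real.log c) := by
    rw [hB, mul_pow, Real.sq_sqrt hz]
    norm_num
  set T : ℝ := 2 * B + 1 with hT
  have hT0 : 0 < T := by positivity
  -- monotone chain
  have hmono : ∀ j, j ≤ k → ∀ i, i ≤ j → H i ⊆ H j := by
    intro j
    induction j with
    | zero => intro _ i hi; rw [Nat.le_zero.1 hi]
    | succ n ihn =>
      intro hn i hi
      rcases Nat.lt_or_ge i (n + 1) with h | h
      · exact (ihn (by omega) i (by omega)).trans (hchain n (by omega))
      · have hi' : i = n + 1 := by omega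
        rw [hi']
  have hndi : ∀ i, i ≤ k → ∀ e ∈ H i, ¬ e.IsDiag :=
    fun i hi e he => hG e (hHk (hmono k le_rfl i hi he))
  -- degree bound: deg (H i) v ≤ β - 1
  have hdeg : ∀ i, i ≤ k → ∀ v, deg (H i) v ≤ β - 1 := by
    intro i
    induction i with
    | zero => intro _ v; simp [hH0, deg]
    | succ n ihn =>
      intro hn v
      by_cases hex : ∃ e ∈ H (n+1) \ H n, v ∈ e
      · obtain ⟨e, he, hv⟩ := hex
        obtain ⟨u, rfl⟩ := Sym2.mem_iff_exists.1 hv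
        have h1 := hprop1 (n+1) (by omega) hn _ he
        have h2 : edeg (H (n+1)) s(v, u) = deg (H (n+1)) v + deg (H (n+1)) u := by
          rw [edeg, Sym2.lift_mk]
        have h3 : 1 ≤ deg (H (n+1)) u := by
          apply Finset.card_pos.2
        -- e ∈ filter (u ∈ ·) (H (n+1))
          exact ⟨s(v,u), Finset.mem_filter.2 ⟨(Finset.mem_sdiff.1 he).1, Sym2.mem_mk_right v u⟩⟩
        omega
      · push_neg at hex
        have hsub : (H (n+1)).filter (fun e => v ∈ e) ⊆ (H n).filter (fun e => v ∈ e) := by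
          intro e he'
          obtain ⟨he1, he2⟩ := Finset.mem_filter.1 he'
          by_cases h : e ∈ H n
          · exact Finset.mem_filter.2 ⟨h, he2⟩
          · exact absurd he2 (hex e (Finset.mem_sdiff.2 ⟨he1, h⟩))
        have h4 : deg (H (n+1)) v ≤ deg (H n) v := Finset.card_le_card hsub
        have h5 := ihn (by omega) v
        omega
  -- matching / representative setup
  set m : V → V := mateF M with hmdef
  have hminv : ∀ w, m (m w) = w := fun w => mateF_invol hM w
  set f : V → ℕ := fun w => ((Fintype.equivFin V) w : ℕ) with hfdef
  have hfinj : Function.Injective f := by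
    intro a b h
    exact (Fintype.equivFin V).injective (Fin.ext h)
  set rp : V → V := repAux f m with hrp
  have hrep_or : ∀ w, rp w = w ∨ rp w = m w := repAux_eq_or f m
  have hblock : ∀ {a b : V}, rp a = rp b → b = a ∨ b = m a :=
    fun {a b} h => repAux_block f hfinj m hminv h
  -- index sets for LLL
  set D : ℕ := 2 * β ^ 2 * k with hD
  set x : ℝ := 1 / (2 * ((D : ℝ) + 1)) with hx
  have hD0 : (0:ℝ) < (D:ℝ) + 1 := by positivity
  have hx0 : 0 < x := by rw [hx]; positivity
  have hx12 : x ≤ 1/2 := by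
    rw [hx, div_le_div_iff₀ (by positivity) (by norm_num)]
    nlinarith
  have hx1 : x < 1 := by linarith
  set J : Finset (V × ℕ) := univ ×ˢ Finset.Icc 1 k with hJ
  set SS : V × ℕ → Finset V := fun p => (insert p.1 (nbrF (H k) p.1)).image rp with hSS
  set Ev : V × ℕ → Finset (V → Bool) := fun p =>
    univ.filter (fun ω : V → Bool =>
      T + 1 ≤ |2 * (((nbrF (H p.2) p.1).filter
          (fun u => chiF (repAux f m) ω u ≠ chiF (repAux f m) ω p.1)).card : ℝ)
        - ((nbrF (H p.2) p.1).card : ℝ)|) with hEv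
  -- cylinder property
  have hcyl : ∀ p ∈ J, IsCyl (SS p) (Ev p) := by
    rintro ⟨v, i⟩ hp ω ω' hag hmem
    have hik : i ≤ k := (Finset.mem_Icc.1 (Finset.mem_product.1 hp).2).2
    have hchi : ∀ u ∈ insert v (nbrF (H k) v), chiF rp ω u = chiF rp ω' u := by
      intro u hu
      apply chiF_congr
      apply hag
      rw [hSS]
      exact Finset.mem_image.2 ⟨u, hu, rfl⟩
    have hfe : (nbrF (H i) v).filter (fun u => chiF (repAux f m) ω u ≠ chiF (repAux f m) ω v)
        = (nbrF (H i) v).filter (fun u => chiF (repAux f m) ω' u ≠ chiF (repAux f m) ω' v) := by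
      apply Finset.filter_congr
      intro u hu
      have hu2 : u ∈ insert v (nbrF (H k) v) :=
        Finset.mem_insert_of_mem (nbrF_mono (hmono k le_rfl i hik) v hu)
      have hv2 : v ∈ insert v (nbrF (H k) v) := Finset.mem_insert_self _ _
      rw [← hrp, hchi u hu2, hchi v hv2]
    rw [hEv] at hmem ⊢
    simp only [Finset.mem_filter, Finset.mem_univ, true_and] at hmem ⊢
    rw [← hfe]
    exact hmem
  -- probability bound
  have hp : ∀ p ∈ J, ((Ev p).card : ℝ) ≤ x * (1 - x) ^ D * 2 ^ (Fintype.card V) := by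
    rintro ⟨v, i⟩ hpJ
    have hik : i ≤ k := (Finset.mem_Icc.1 (Finset.mem_product.1 hpJ).2).2
    have hdegv : (nbrF (H i) v).card ≤ β := by
      rw [card_nbrF]
      have := hdeg i hik v
      omega
    have hEB := event_bound (H i) (hndi i hik) f hfinj m hminv v β (by omega) hdegv T hT0
    have hstep : ((Ev (v, i)).card : ℝ)
        ≤ 2 ^ (Fintype.card V) * (2 * Real.exp (-(T^2) / (2*β))) := hEB
    -- numeric chain
    have h144 : 144 * ((β:ℝ) * Real.log c) ≤ T ^ 2 := by
      rw [hT]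
      nlinarith [hBsq, hB0]
    have hexp1 : Real.exp (-(T^2) / (2*β)) ≤ Real.exp (-(72 * Real.log c)) := by
      apply Real.exp_le_exp.2
      rw [neg_div]
      rw [neg_le_neg_iff]
      rw [le_div_iff₀ (by positivity)]
      nlinarith [h144]
    have hexp2 : Real.exp (-(72 * Real.log c)) = (c ^ (72:ℕ))⁻¹ := by
      rw [Real.exp_neg]
      congr 1
      rw [show (72:ℝ) * Real.log c = ((72:ℕ):ℝ) * Real.log c by norm_num,
        Real.exp_nat_mul, Real.exp_log hc0]
    have hpow : (1:ℝ) - (D:ℝ) * x ≤ (1 - x) ^ D := by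
      have := one_add_mul_le_pow (a := -x) (by linarith) D
      calc (1:ℝ) - (D:ℝ) * x = 1 + (D:ℝ) * (-x) := by ring
        _ ≤ (1 + -x) ^ D := this
        _ = (1 - x) ^ D := by ring_nf
    have hhalf : (1:ℝ)/2 ≤ (1 - x) ^ D := by
      have hDx : (D:ℝ) * x ≤ 1/2 := by
        rw [hx]
        rw [mul_one_div, div_le_div_iff₀ (by positivity) (by norm_num)]
        nlinarith [Nat.cast_nonneg (α := ℝ) D]
      linarith
    have hxlb : 1 / (4 * ((D:ℝ) + 1)) ≤ x * (1 - x) ^ D := by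
      calc 1 / (4 * ((D:ℝ) + 1)) = x * (1/2) := by
            rw [hx]
            field_simp
            ring
        _ ≤ x * (1 - x) ^ D := by
            apply mul_le_mul_of_nonneg_left hhalf (le_of_lt hx0)
    have hcD : 8 * ((D:ℝ) + 1) ≤ c ^ (72:ℕ) := by
      have hkR : (1:ℝ) ≤ (k:ℝ) := by exact_mod_cast hk
      have hβR : (2:ℝ) ≤ (β:ℝ) := by exact_mod_cast hβ
      have hDval : ((D:ℝ)) = 2 * (β:ℝ)^2 * (k:ℝ) := by
        rw [hD]; push_cast; ring
      have h1 : 8 * ((D:ℝ) + 1) ≤ 24 * (β:ℝ)^2 * (k:ℝ) := by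
        rw [hDval]; nlinarith
      have h2 : 24 * (β:ℝ)^2 * (k:ℝ) ≤ 24 * c^2 := by
        rw [hc]; nlinarith
      have h3 : (32:ℝ) ≤ c ^ (70:ℕ) := by
        calc (32:ℝ) ≤ 2 ^ (70:ℕ) := by norm_num
          _ ≤ c ^ (70:ℕ) := pow_le_pow_left₀ (by norm_num) hc2 70
      have h4 : c ^ (72:ℕ) = c ^ (70:ℕ) * c^2 := by
        rw [← pow_add]
      have hc20 : (0:ℝ) < c^2 := by positivity
      nlinarith [h3, hc20]
    have hfin : 2 * Real.exp (-(T^2) / (2*(β:ℝ))) ≤ x * (1 - x) ^ D := by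
      have hA : 2 * Real.exp (-(T^2) / (2*(β:ℝ))) ≤ 2 * (c ^ (72:ℕ))⁻¹ := by
        rw [← hexp2]
        linarith [hexp1]
      have hc72 : (0:ℝ) < c ^ (72:ℕ) := by positivity
      have hB2 : 2 * (c ^ (72:ℕ))⁻¹ ≤ 1 / (4 * ((D:ℝ) + 1)) := by
        have h5 : 2 * (c ^ (72:ℕ))⁻¹ = 2 / c ^ (72:ℕ) := by ring
        rw [h5, div_le_div_iff₀ hc72 (by positivity)]
        nlinarith [hcD]
      calc 2 * Real.exp (-(T^2) / (2*(β:ℝ))) ≤ 2 * (c ^ (72:ℕ))⁻¹ := hA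
        _ ≤ 1 / (4 * ((D:ℝ) + 1)) := hB2
        _ ≤ x * (1 - x) ^ D := hxlb
    calc ((Ev (v, i)).card : ℝ)
        ≤ 2 ^ (Fintype.card V) * (2 * Real.exp (-(T^2) / (2*β))) := hstep
      _ ≤ 2 ^ (Fintype.card V) * (x * (1 - x) ^ D) := by
          apply mul_le_mul_of_nonneg_left hfin (by positivity)
      _ = x * (1 - x) ^ D * 2 ^ (Fintype.card V) := by ring
  -- dependency bound
  have hdep : ∀ p ∈ J, ((J.filter (fun q => ¬ Disjoint (SS p) (SS q))).card ≤ D + 1) := by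
    rintro ⟨v, i⟩ hpJ
    set Ball : Finset V := (insert v (nbrF (H k) v)).biUnion
      (fun a => (insert a (nbrF (H k) a)) ∪ (insert (m a) (nbrF (H k) (m a)))) with hBall
    have hIns : ∀ w : V, (insert w (nbrF (H k) w)).card ≤ β := by
      intro w
      have h1 := Finset.card_insert_le w (nbrF (H k) w)
      have h2 : (nbrF (H k) w).card ≤ β - 1 := by
        rw [card_nbrF]; exact hdeg k le_rfl w
      omega
    have hBallCard : Ball.card ≤ 2 * β ^ 2 := by
      calc Ball.card ≤ ∑ a ∈ insert v (nbrF (H k) v),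
            ((insert a (nbrF (H k) a)) ∪ (insert (m a) (nbrF (H k) (m a)))).card :=
          Finset.card_biUnion_le
        _ ≤ ∑ a ∈ insert v (nbrF (H k) v), (2 * β) := by
            apply Finset.sum_le_sum
            intro a _
            calc ((insert a (nbrF (H k) a)) ∪ (insert (m a) (nbrF (H k) (m a)))).card
                ≤ (insert a (nbrF (H k) a)).card + (insert (m a) (nbrF (H k) (m a))).card :=
                  Finset.card_union_le _ _
              _ ≤ 2 * β := by
                  have := hIns a
                  have := hIns (m a)
                  omega
        _ = (insert v (nbrF (H k) v)).card * (2 * β) := by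
            rw [Finset.sum_const, smul_eq_mul]
        _ ≤ β * (2 * β) := Nat.mul_le_mul_right _ (hIns v)
        _ = 2 * β ^ 2 := by ring
    have hsubB : J.filter (fun q => ¬ Disjoint (SS (v, i)) (SS q)) ⊆ Ball ×ˢ Finset.Icc 1 k := by
      rintro ⟨u, j⟩ hq
      obtain ⟨hqJ, hqd⟩ := Finset.mem_filter.1 hq
      have hjI : j ∈ Finset.Icc 1 k := (Finset.mem_product.1 hqJ).2
      obtain ⟨r, hr1, hr2⟩ := Finset.not_disjoint_iff.1 hqd
      rw [hSS] at hr1 hr2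
      obtain ⟨a, ha, hra⟩ := Finset.mem_image.1 hr1
      obtain ⟨b, hb, hrb⟩ := Finset.mem_image.1 hr2
      have hab : rp a = rp b := by rw [hra, hrb]
      have huB : u ∈ Ball := by
        have hbu : u ∈ insert b (nbrF (H k) b) := by
          rcases Finset.mem_insert.1 hb with h | h
          · rw [h]; exact Finset.mem_insert_self _ _
          · apply Finset.mem_insert_of_mem
            rw [mem_nbrF] at h ⊢
            rwa [Sym2.eq_swap] at h
        rcases hblock hab with h | h
        · rw [hBall]
          apply Finset.mem_biUnion.2 ⟨a, ha, ?_⟩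
          apply Finset.mem_union_left
          rwa [h] at hbu
        · rw [hBall]
          apply Finset.mem_biUnion.2 ⟨a, ha, ?_⟩
          apply Finset.mem_union_right
          rwa [h] at hbu
      exact Finset.mem_product.2 ⟨huB, hjI⟩
    have h1 := Finset.card_le_card hsubB
    have h2 : (Ball ×ˢ Finset.Icc 1 k).card = Ball.card * k := by
      rw [Finset.card_product, Nat.card_Icc, Nat.add_sub_cancel]
    have h3 : Ball.card * k ≤ (2 * β ^ 2) * k := Nat.mul_le_mul_right _ hBallCard
    rw [hD]
    omega
  -- apply the local lemma
  obtain ⟨ω, hω⟩ := lll_exists Ev SS J hcyl x (le_of_lt hx0) hx1 D hp hdep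
  -- final bipartition
  refine ⟨univ.filter (fun w => chiF rp ω w = true), ?_, ?_⟩
  · -- matching edges cross
    intro e
    induction e using Sym2.inductionOn with
    | hf a b =>
      intro he
      have hab : m a = b := mateF_unique hM he
      have hne : m a ≠ a := by
        rw [hab]
        exact fun hc => (mateF_ne hM he) hc.symm
      have hflip : chiF rp ω b = !(chiF rp ω a) := by
        rw [← hab]
        have hcm := chiF_mate f hfinj m hminv ω hne
        rw [← hrp] at hcm
        exact hcm
      cases hca : chiF rp ω a
      · refine ⟨b, a, Sym2.eq_swap, ?_, ?_⟩
        · simp only [Finset.mem_filter, Finset.mem_univ, true_and]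
          rw [hflip, hca]
          rfl
        · simp only [Finset.mem_filter, Finset.mem_univ, true_and]
          rw [hca]
          simp
      · refine ⟨a, b, rfl, ?_, ?_⟩
        · simp only [Finset.mem_filter, Finset.mem_univ, true_and]
          exact hca
        · simp only [Finset.mem_filter, Finset.mem_univ, true_and]
          rw [hflip, hca]
          simp
  · -- degree condition
    intro v i h1i hik
    have hpJ : (v, i) ∈ J := by
      rw [hJ]
      exact Finset.mem_product.2 ⟨Finset.mem_univ _, Finset.mem_Icc.2 ⟨h1i, hik⟩⟩
    have hnotin := hω (v, i) hpJ
    rw [hEv] at hnotin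
    simp only [Finset.mem_filter, Finset.mem_univ, true_and, not_le] at hnotin
    have hfeq : (nbrF (H i) v).filter
        (fun u => (∃ a b, s(v, u) = s(a, b) ∧ a ∈ univ.filter (fun w => chiF rp ω w = true)
          ∧ b ∉ univ.filter (fun w => chiF rp ω w = true)))
        = (nbrF (H i) v).filter (fun u => chiF (repAux f m) ω u ≠ chiF (repAux f m) ω v) := by
      apply Finset.filter_congr
      intro u hu
      rw [← hrp]
      simp only [Finset.mem_filter, Finset.mem_univ, true_and]
      constructor
      · rintro ⟨a, b, heq, haL, hbL⟩
        rcases Sym2.eq_iff.1 heq with ⟨h1, h2⟩ | ⟨h1, h2⟩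
        · subst h1; subst h2
          intro hcc
          exact hbL (hcc.trans haL)
        · subst h1; subst h2
          intro hcc
          exact hbL (hcc.symm.trans haL)
      · intro hne
        cases hv : chiF rp ω v
        · have hut : chiF rp ω u = true := by
            cases hu2 : chiF rp ω u
            · exact absurd (hu2.trans hv.symm) hne
            · rfl
          refine ⟨u, v, Sym2.eq_swap, hut, ?_⟩
          rw [hv]
          simp
        · exact ⟨v, u, rfl, hv, fun hc => hne (hc.trans hv.symm)⟩
    have hkey : deg ((H i).filter (fun e => ∃ a b, e = s(a, b)
        ∧ a ∈ univ.filter (fun w => chiF rp ω w = true)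
        ∧ b ∉ univ.filter (fun w => chiF rp ω w = true))) v
        = ((nbrF (H i) v).filter
          (fun u => chiF (repAux f m) ω u ≠ chiF (repAux f m) ω v)).card := by
      rw [← card_nbrF_filter, hfeq]
    rw [hkey, ← card_nbrF (H i) v]
    have habs := abs_lt.1 hnotin
    rw [abs_lt]
    constructor
    · rw [hT] at habs
      linarith [habs.1]
    · rw [hT] at habs
      linarith [habs.2]
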